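/- Let $g \ge 1$ and let $G$ be a group containing elements $c_1,\dots,c_{2g+1}$ satisfying the braid relations, and set $\bar d_j = c_{j+1}^{-1} c_j c_{j+1}$. Then the sequence $(c_1, c_2, \dots, c_{2g+1}, c_1, c_2, \dots, c_{2g+1})$ of length $4g+2$ is Hurwitz equivalent up to simultaneous conjugation to the sequence $(\bar d_2, \bar d_4, \dots, \bar d_{2g}, c_1, c_2, \dots, c_{2g}, c_{2g+1}, \dots, c_{2g+1})$, where $c_{2g+1}$ is repeated $g+2$ times. -/

import Mathlib

/-- One elementary (Hurwitz) transformation of sequences in a group. -/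
def HurwitzStep {G : Type*} [Group G] (s t : List G) : Prop :=
  ∃ (l₁ l₂ : List G) (x y : G),
    (s = l₁ ++ x :: y :: l₂ ∧ t = l₁ ++ (x * y * x⁻¹) :: x :: l₂) ∨
    (s = l₁ ++ x :: y :: l₂ ∧ t = l₁ ++ y :: (y⁻¹ * x * y) :: l₂)

/-- One move of Hurwitz equivalence up to simultaneous conjugation. -/
def HurwitzStepC {G : Type*} [Group G] (s t : List G) : Prop :=
  HurwitzStep s t ∨ ∃ ψ : G, t = s.map fun w => ψ * w * ψ⁻¹

/-- Hurwitz equivalence up to simultaneous conjugation. -/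
def HurwitzEquivC {G : Type*} [Group G] : List G → List G → Prop :=
  Relation.ReflTransGen HurwitzStepC

/-- The sequence `a m, a (m+1), …, a k` (ascending indices). -/
def seqAsc {G : Type*} (a : ℕ → G) (m k : ℕ) : List G :=
  (List.range (k + 1 - m)).map fun i => a (m + i)

namespace S15
variable {G : Type*} [Group G]

/-- Pure Hurwitz equivalence. -/
def HE : List G → List G → Prop := Relation.ReflTransGen HurwitzStep

lemma HE.refl (s : List G) : HE s s := Relation.ReflTransGen.refl

lemma HE.trans {s t u : List G} (h1 : HE s t) (h2 : HE t u) : HE s u :=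
  Relation.ReflTransGen.trans h1 h2

lemma hstep_symm {s t : List G} (h : HurwitzStep s t) : HurwitzStep t s := by
  obtain ⟨l₁, l₂, x, y, h | h⟩ := h
  · exact ⟨l₁, l₂, x * y * x⁻¹, x, Or.inr ⟨h.2, by rw [h.1]; group⟩⟩
  · exact ⟨l₁, l₂, y, y⁻¹ * x * y, Or.inl ⟨h.2, by rw [h.1]; group⟩⟩

lemma HE.symm {s t : List G} (h : HE s t) : HE t s := by
  induction h with
  | refl => exact HE.refl _
  | tail _ h2 ih => exact HE.trans (Relation.ReflTransGen.single (hstep_symm h2)) ih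

lemma hstep_append {s t : List G} (l r : List G) (h : HurwitzStep s t) :
    HurwitzStep (l ++ s ++ r) (l ++ t ++ r) := by
  obtain ⟨l₁, l₂, x, y, h | h⟩ := h
  · exact ⟨l ++ l₁, l₂ ++ r, x, y, Or.inl ⟨by simp [h.1], by simp [h.2]⟩⟩
  · exact ⟨l ++ l₁, l₂ ++ r, x, y, Or.inr ⟨by simp [h.1], by simp [h.2]⟩⟩

lemma HE.append {s t : List G} (l r : List G) (h : HE s t) :
    HE (l ++ s ++ r) (l ++ t ++ r) := by
  induction h with
  | refl => exact HE.refl _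
  | tail _ h2 ih => exact HE.trans ih (Relation.ReflTransGen.single (hstep_append l r h2))

lemma HE.toC {s t : List G} (h : HE s t) : HurwitzEquivC s t := by
  induction h with
  | refl => exact Relation.ReflTransGen.refl
  | tail _ h2 ih => exact Relation.ReflTransGen.tail ih (Or.inl h2)

lemma HEC.trans {s t u : List G} (h1 : HurwitzEquivC s t) (h2 : HurwitzEquivC t u) :
    HurwitzEquivC s u := Relation.ReflTransGen.trans h1 h2

lemma HEC.conj (ψ : G) (s : List G) : HurwitzEquivC s (s.map fun w => ψ * w * ψ⁻¹) :=
  Relation.ReflTransGen.single (Or.inr ⟨ψ, rfl⟩)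

/-- left move -/
lemma HE.moveL (l r : List G) (x y : G) :
    HE (l ++ x :: y :: r) (l ++ (x * y * x⁻¹) :: x :: r) :=
  Relation.ReflTransGen.single ⟨l, r, x, y, Or.inl ⟨rfl, rfl⟩⟩

/-- slide an element left across a block, getting conjugated -/
lemma HE.slide_block (l r L : List G) (x : G) :
    HE (l ++ L ++ x :: r) (l ++ (L.prod * x * L.prod⁻¹) :: L ++ r) := by
  induction L generalizing l with
  | nil => simp [HE.refl]
  | cons a L ih =>
    have h1 : HE (l ++ (a :: L) ++ x :: r) (l ++ a :: (L.prod * x * L.prod⁻¹) :: L ++ r) := by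
      have := ih (l ++ [a])
      simpa using this
    have h2 : HE (l ++ a :: (L.prod * x * L.prod⁻¹) :: L ++ r)
        (l ++ ((a :: L).prod * x * (a :: L).prod⁻¹) :: a :: L ++ r) := by
      have h := HE.moveL l (L ++ r) a (L.prod * x * L.prod⁻¹)
      have e : a * (L.prod * x * L.prod⁻¹) * a⁻¹ = (a :: L).prod * x * (a :: L).prod⁻¹ := by
        simp only [List.prod_cons, mul_inv_rev]; group
      rw [e] at h
      simpa using h
    exact h1.trans h2
end S15

namespace S15
variable {G : Type*} [Group G]

lemma HE.slide_comm_left (l r L : List G) (x : G) (h : ∀ b ∈ L, Commute x b) :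
    HE (l ++ L ++ x :: r) (l ++ x :: L ++ r) := by
  have hc : Commute x L.prod := Commute.list_prod_right _ _ h
  have := HE.slide_block l r L x
  rwa [show L.prod * x * L.prod⁻¹ = x by rw [← hc.eq]; group] at this

lemma HE.slide_comm_right (l r L : List G) (x : G) (h : ∀ b ∈ L, Commute x b) :
    HE (l ++ x :: L ++ r) (l ++ L ++ x :: r) :=
  (HE.slide_comm_left l r L x h).symm

lemma HE.rep_slide_right (l r L : List G) (a : G) (n : ℕ) (h : ∀ b ∈ L, Commute a b) :
    HE (l ++ List.replicate n a ++ L ++ r) (l ++ L ++ List.replicate n a ++ r) := by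
  induction n generalizing r with
  | zero => simp [HE.refl]
  | succ n ih =>
    have h1 : HE (l ++ List.replicate (n+1) a ++ L ++ r)
        (l ++ List.replicate n a ++ L ++ a :: r) := by
      have := HE.slide_comm_right (l ++ List.replicate n a) r L a h
      rw [List.replicate_succ']
      simpa [List.append_assoc] using this
    refine h1.trans ?_
    have := ih (a :: r)
    have e : l ++ L ++ List.replicate n a ++ a :: r
        = l ++ L ++ List.replicate (n+1) a ++ r := by
      rw [List.replicate_succ']
      simp [List.append_assoc]
    rw [← e]
    exact this

lemma HE.rep_slide_left (l r L : List G) (a : G) (n : ℕ) (h : ∀ b ∈ L, Commute a b) :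
    HE (l ++ L ++ List.replicate n a ++ r) (l ++ List.replicate n a ++ L ++ r) :=
  (HE.rep_slide_right l r L a n h).symm

/-- peel: an element written as conjugate by `a^n` moves left across `n` copies of `a`. -/
lemma HE.peel (l r : List G) (a y : G) (n : ℕ) :
    HE (l ++ List.replicate n a ++ y :: r) (l ++ (a ^ n * y * (a ^ n)⁻¹) :: List.replicate n a ++ r) := by
  have := HE.slide_block l r (List.replicate n a) y
  rwa [List.prod_replicate] at this

/-- the classical braid move on three consecutive entries -/
lemma HE.core3 (l r : List G) (a b : G) (h : a * b * a = b * a * b) :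
    HE (l ++ a :: b :: a :: r) (l ++ b :: a :: b :: r) := by
  have h1 := HE.moveL (l ++ [a]) r b a
  have h2 := HE.moveL l ((b :: r)) a (b * a * b⁻¹)
  simp only [List.append_assoc, List.cons_append, List.nil_append] at h1 h2
  refine HE.trans h1 (HE.trans h2 ?_)
  have e1 : a * (b * a * b⁻¹) * a⁻¹ = b := by
    rw [show a * (b * a * b⁻¹) * a⁻¹ = (a * b * a) * (b⁻¹ * a⁻¹) by group, h]
    group
  rw [e1]
  exact HE.refl _

/-- promotion: `[a, b] ++ a^n ~ b^n ++ [a, b]` under the braid relation. -/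
lemma HE.promote (l r : List G) (a b : G) (n : ℕ) (h : a * b * a = b * a * b) :
    HE (l ++ a :: b :: List.replicate n a ++ r) (l ++ List.replicate n b ++ a :: b :: r) := by
  induction n generalizing l with
  | zero => simp [HE.refl]
  | succ n ih =>
    have h1 : HE (l ++ a :: b :: List.replicate (n+1) a ++ r)
        (l ++ b :: a :: b :: List.replicate n a ++ r) := by
      have := HE.core3 l (List.replicate n a ++ r) a b h
      simpa [List.replicate_succ] using this
    refine h1.trans ?_
    have := ih (l ++ [b])
    simp only [List.append_assoc, List.cons_append, List.nil_append] at this ⊢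
    rw [List.replicate_succ]
    simpa using this

end S15

set_option linter.unusedSectionVars false
namespace S15
variable {G : Type*} [Group G]
variable {a : ℕ → G}

lemma seqAsc_nil {m k : ℕ} (h : k + 1 ≤ m) : seqAsc a m k = [] := by
  simp [seqAsc, Nat.sub_eq_zero_of_le h]

lemma seqAsc_self (m : ℕ) : seqAsc a m m = [a m] := by
  unfold seqAsc
  rw [show m + 1 - m = 1 from by omega, List.range_succ]
  simp

lemma seqAsc_cons {m k : ℕ} (h : m ≤ k) : seqAsc a m k = a m :: seqAsc a (m+1) k := by
  unfold seqAsc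
  rw [show k + 1 - m = (k - m) + 1 from by omega, List.range_succ_eq_map]
  simp only [List.map_cons, List.map_map, Nat.add_zero]
  congr 1
  · rw [show k + 1 - (m+1) = k - m from by omega]
    apply List.map_congr_left
    intro i _
    simp [Function.comp]
    congr 1
    omega

lemma seqAsc_snoc {m k : ℕ} (h : m ≤ k + 1) : seqAsc a m (k+1) = seqAsc a m k ++ [a (k+1)] := by
  unfold seqAsc
  rw [show k + 1 + 1 - m = (k + 1 - m) + 1 from by omega, List.range_succ]
  rw [List.map_append]
  simp [show m + (k + 1 - m) = k + 1 from by omega]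

lemma seqAsc_append {m j k : ℕ} (h1 : m ≤ j + 1) (h2 : j ≤ k) :
    seqAsc a m j ++ seqAsc a (j+1) k = seqAsc a m k := by
  induction k, h2 using Nat.le_induction with
  | base => rw [seqAsc_nil (le_refl (j+1))]; simp
  | succ k hk ih =>
    rw [seqAsc_snoc (by omega : j + 1 ≤ k + 1), seqAsc_snoc (by omega : m ≤ k + 1),
      ← List.append_assoc, ih]

lemma mem_seqAsc {m k : ℕ} {x : G} (h : x ∈ seqAsc a m k) :
    ∃ i, m ≤ i ∧ i ≤ k ∧ x = a i := by
  simp only [seqAsc, List.mem_map, List.mem_range] at h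
  obtain ⟨i, hi, rfl⟩ := h
  exact ⟨m + i, by omega, by omega, rfl⟩

lemma seqAsc_congr {m k : ℕ} {b : ℕ → G} (h : ∀ i, m ≤ i → i ≤ k → a i = b i) :
    seqAsc a m k = seqAsc b m k := by
  unfold seqAsc
  apply List.map_congr_left
  intro i hi
  simp only [List.mem_range] at hi
  exact h (m + i) (by omega) (by omega)

lemma map_seqAsc (f : G → G) (m k : ℕ) :
    (seqAsc a m k).map f = seqAsc (fun i => f (a i)) m k := by
  simp [seqAsc, List.map_map, Function.comp]

end S15

namespace S15
set_option linter.unusedSectionVars false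
variable {G : Type*} [Group G]

lemma conj_fix {ψ x : G} (h : Commute ψ x) : ψ * x * ψ⁻¹ = x := by
  rw [h.eq]; group

section Ctx
variable {g : ℕ} {c : ℕ → G}

def Hb (g : ℕ) (c : ℕ → G) : Prop :=
  ∀ i, 1 ≤ i → i + 1 ≤ 2 * g + 1 → c i * c (i + 1) * c i = c (i + 1) * c i * c (i + 1)

def Hc (g : ℕ) (c : ℕ → G) : Prop :=
  ∀ i j, 1 ≤ i → j ≤ 2 * g + 1 → i + 2 ≤ j → c i * c j = c j * c i

lemma comm_c (hcomm : Hc g c) {i j : ℕ} (h1 : 1 ≤ i) (h2 : j ≤ 2*g+1) (h3 : i + 2 ≤ j) :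
    Commute (c i) (c j) := hcomm i j h1 h2 h3

lemma comm_prod_right (hcomm : Hc g c) {i a b : ℕ} (h1 : 1 ≤ i) (h2 : b ≤ 2*g+1)
    (h3 : i + 2 ≤ a) : Commute (c i) (seqAsc c a b).prod := by
  apply Commute.list_prod_right
  intro y hy
  obtain ⟨j, hj1, hj2, rfl⟩ := mem_seqAsc hy
  exact comm_c hcomm h1 (by omega) (by omega)

lemma comm_prod_left (hcomm : Hc g c) {i a b : ℕ} (h1 : 1 ≤ a) (h2 : i ≤ 2*g+1)
    (h3 : b + 2 ≤ i) : Commute (seqAsc c a b).prod (c i) := by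
  apply Commute.list_prod_left
  intro y hy
  obtain ⟨j, hj1, hj2, rfl⟩ := mem_seqAsc hy
  exact comm_c hcomm (by omega) h2 (by omega)

/-- the shift identity: `(c 1 ⋯ c m) * c i * (c 1 ⋯ c m)⁻¹ = c (i+1)` -/
lemma shift (hbraid : Hb g c) (hcomm : Hc g c) {i : ℕ} (h1 : 1 ≤ i) (h2 : i + 1 ≤ 2*g+1) :
    (seqAsc c 1 (2*g+1)).prod * c i = c (i+1) * (seqAsc c 1 (2*g+1)).prod := by
  set m := 2*g+1 with hm
  have hsplit1 : seqAsc c 1 (i+1) ++ seqAsc c (i+2) m = seqAsc c 1 m :=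
    seqAsc_append (by omega) (by omega)
  have hsplit2 : seqAsc c 1 (i-1) ++ seqAsc c i (i+1) = seqAsc c 1 (i+1) := by
    have := seqAsc_append (a := c) (m := 1) (j := i-1) (k := i+1) (by omega) (by omega)
    rwa [show i - 1 + 1 = i from by omega] at this
  have hpair : seqAsc c i (i+1) = [c i, c (i+1)] := by
    rw [seqAsc_cons (by omega), seqAsc_self]
  have e1 : (seqAsc c 1 m).prod
      = (seqAsc c 1 (i-1)).prod * (c i * c (i+1)) * (seqAsc c (i+2) m).prod := by
    rw [← hsplit1, ← hsplit2, hpair]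
    simp [List.prod_append, mul_assoc]
  have hci : Commute (c i) (seqAsc c (i+2) m).prod :=
    comm_prod_right hcomm h1 (le_refl m) (le_refl (i+2))
  have hci1 : Commute (seqAsc c 1 (i-1)).prod (c (i+1)) :=
    comm_prod_left hcomm (le_refl 1) (by omega) (by omega)
  rw [e1]
  calc (seqAsc c 1 (i-1)).prod * (c i * c (i+1)) * (seqAsc c (i+2) m).prod * c i
      = (seqAsc c 1 (i-1)).prod * (c i * c (i+1) * c i) * (seqAsc c (i+2) m).prod := by
        rw [mul_assoc _ _ (c i), ← hci.eq]; group
    _ = (seqAsc c 1 (i-1)).prod * (c (i+1) * (c i * c (i+1))) * (seqAsc c (i+2) m).prod := by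
        rw [hbraid i h1 (by omega)]; group
    _ = c (i+1) * ((seqAsc c 1 (i-1)).prod * (c i * c (i+1)) * (seqAsc c (i+2) m).prod) := by
        rw [show (seqAsc c 1 (i-1)).prod * (c (i+1) * (c i * c (i+1)))
            = ((seqAsc c 1 (i-1)).prod * c (i+1)) * (c i * c (i+1)) from by group,
          hci1.eq]
        group

lemma shift_conj (hbraid : Hb g c) (hcomm : Hc g c) {i : ℕ} (h1 : 1 ≤ i)
    (h2 : i + 1 ≤ 2*g+1) :
    (seqAsc c 1 (2*g+1)).prod * c i * ((seqAsc c 1 (2*g+1)).prod)⁻¹ = c (i+1) := by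
  rw [shift hbraid hcomm h1 h2]; group

/-- Step A -/
lemma stepA (hbraid : Hb g c) (hcomm : Hc g c) (hg : 1 ≤ g) :
    HE (seqAsc c 1 (2*g+1) ++ seqAsc c 1 (2*g+1))
       (seqAsc c 2 (2*g+1) ++ seqAsc c 1 (2*g+1) ++ [c (2*g+1)]) := by
  set m := 2*g+1 with hm
  set B := seqAsc c 1 m with hB
  have key : ∀ t, t ≤ m - 1 →
      HE (B ++ B) (seqAsc c 2 (t+1) ++ B ++ seqAsc c (t+1) m) := by
    intro t ht
    induction t with
    | zero =>
      rw [seqAsc_nil (by omega : 1 + 1 ≤ 2)]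
      simpa using HE.refl (B ++ B)
    | succ t ih =>
      refine (ih (by omega)).trans ?_
      have hmid : seqAsc c (t+1) m = c (t+1) :: seqAsc c (t+2) m := seqAsc_cons (by omega)
      have hsl := HE.slide_block (seqAsc c 2 (t+1)) (seqAsc c (t+2) m) B (c (t+1))
      rw [show B.prod * c (t+1) * B.prod⁻¹ = c (t+2) from
        shift_conj hbraid hcomm (by omega) (by omega)] at hsl
      have e2 : seqAsc c 2 (t+1) ++ [c (t+2)] = seqAsc c 2 (t+1+1) :=
        (seqAsc_snoc (by omega)).symm
      have estart : seqAsc c 2 (t+1) ++ B ++ seqAsc c (t+1) m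
          = seqAsc c 2 (t+1) ++ B ++ c (t+1) :: seqAsc c (t+2) m := by
        rw [hmid]
      have eend : seqAsc c 2 (t+1) ++ c (t+2) :: B ++ seqAsc c (t+2) m
          = seqAsc c 2 (t+1+1) ++ B ++ seqAsc c (t+1+1) m := by
        rw [← e2]; simp [List.append_assoc]
      rw [estart, ← eend]
      exact hsl
  have h := key (m-1) (le_refl _)
  rw [show m - 1 + 1 = m from by omega, seqAsc_self m] at h
  exact h

end Ctx
end S15

namespace S15
set_option linter.unusedSectionVars false
variable {G : Type*} [Group G]

lemma HE.congr {s s' t t' : List G} (hs : s = s') (ht : t = t') (h : HE s t) : HE s' t' := by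
  rw [← hs, ← ht]; exact h

lemma rep_shift {α : Type*} (n : ℕ) (x : α) (L : List α) :
    List.replicate n x ++ x :: L = x :: (List.replicate n x ++ L) := by
  induction n with
  | zero => simp
  | succ n ih => simp [List.replicate_succ, ih]

/-- The core pure-Hurwitz computation of one stage (k < m case). -/
lemma stage_core (Dd V U' Tl : List G) (a b e f : G) (n' : ℕ)
    (hbe : b * e * b = e * b * e)
    (hef : e * f * e = f * e * f)
    (hbf : Commute b f)
    (hbU' : ∀ x ∈ U', Commute b x)
    (hbV : ∀ x ∈ V, Commute b x)
    (heV : ∀ x ∈ V, Commute e x)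
    (heU' : ∀ x ∈ U', Commute e x)
    (hea : Commute e a) :
    HE (Dd ++ List.replicate n' b ++
          ((b^(n'+1))⁻¹ * a * b^(n'+1)) :: b :: ((b^(n'+1))⁻¹ * e * b^(n'+1)) ::
          (f :: U') ++ V ++
          ((b^(n'+1))⁻¹ * a * b^(n'+1)) :: b :: ((b^(n'+1))⁻¹ * e * b^(n'+1)) ::
          (f :: U') ++ Tl)
       (Dd ++ (b⁻¹ * a * b) :: List.replicate (n'+1) f ++ e ::
          (f :: U') ++ V ++ a :: b :: e :: (f :: U') ++ Tl) := by
  set N := n' + 1 with hN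
  set w := (b^N)⁻¹ * a * b^N with hw
  set v := (b^N)⁻¹ * e * b^N with hv
  set d := b⁻¹ * a * b with hd
  set U : List G := f :: U' with hU
  have hbUall : ∀ x ∈ U, Commute b x := by
    intro x hx
    rcases List.mem_cons.mp hx with h | h
    · rw [h]; exact hbf
    · exact hbU' x h
  have I1 : b ^ n' * w * (b ^ n')⁻¹ = d := by
    rw [hw, hd, hN, pow_succ']
    group
  have I2 : b ^ N * w * (b ^ N)⁻¹ = a := by rw [hw]; group
  have I3 : b ^ N * v * (b ^ N)⁻¹ = e := by rw [hv]; group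
  -- S0 → S1 : peel front w through n' copies of b
  have t1 : HE (Dd ++ List.replicate n' b ++ w :: b :: v :: U ++ V ++ w :: b :: v :: U ++ Tl)
      (Dd ++ d :: List.replicate N b ++ v :: U ++ V ++ w :: b :: v :: U ++ Tl) := by
    have h := HE.peel Dd (b :: v :: U ++ V ++ w :: b :: v :: U ++ Tl) b w n'
    rw [I1] at h
    refine HE.congr ?_ ?_ h <;>
      simp [hN, List.replicate_succ', List.append_assoc]
  -- S1 → S2 : peel front v through N copies of b
  have t2 : HE (Dd ++ d :: List.replicate N b ++ v :: U ++ V ++ w :: b :: v :: U ++ Tl)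
      (Dd ++ d :: e :: List.replicate N b ++ U ++ V ++ w :: b :: v :: U ++ Tl) := by
    have h := HE.peel (Dd ++ [d]) (U ++ V ++ w :: b :: v :: U ++ Tl) b v N
    rw [I3] at h
    refine HE.congr ?_ ?_ h <;> simp [List.append_assoc]
  -- S2 → S3 : slide the N copies of b right across U ++ V
  have t3 : HE (Dd ++ d :: e :: List.replicate N b ++ U ++ V ++ w :: b :: v :: U ++ Tl)
      (Dd ++ d :: e :: U ++ V ++ List.replicate N b ++ w :: b :: v :: U ++ Tl) := by
    have h := HE.rep_slide_right (Dd ++ [d, e]) (w :: b :: v :: U ++ Tl) (U ++ V) b N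
      (by intro x hx; rcases List.mem_append.mp hx with h | h
          exacts [hbUall x h, hbV x h])
    refine HE.congr ?_ ?_ h <;> simp [List.append_assoc]
  -- S3 → S4 : peel block w through the N copies of b
  have t4 : HE (Dd ++ d :: e :: U ++ V ++ List.replicate N b ++ w :: b :: v :: U ++ Tl)
      (Dd ++ d :: e :: U ++ V ++ a :: b :: List.replicate N b ++ v :: U ++ Tl) := by
    have h := HE.peel (Dd ++ d :: e :: U ++ V) (b :: v :: U ++ Tl) b w N
    rw [I2] at h
    refine HE.congr ?_ ?_ h <;>
      simp [List.replicate_succ', List.append_assoc, List.replicate_succ, rep_shift]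
  -- S4 → S5 : peel block v through the (rightmost) N copies of b
  have t5 : HE (Dd ++ d :: e :: U ++ V ++ a :: b :: List.replicate N b ++ v :: U ++ Tl)
      (Dd ++ d :: e :: U ++ V ++ a :: b :: e :: List.replicate N b ++ U ++ Tl) := by
    have h := HE.peel (Dd ++ d :: e :: U ++ V ++ [a, b]) (U ++ Tl) b v N
    rw [I3] at h
    refine HE.congr ?_ ?_ h <;> simp [List.append_assoc]
  -- S5 → S6 : promote the N strays b across the pair (b, e)
  have t6 : HE (Dd ++ d :: e :: U ++ V ++ a :: b :: e :: List.replicate N b ++ U ++ Tl)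
      (Dd ++ d :: e :: U ++ V ++ a :: List.replicate N e ++ b :: e :: U ++ Tl) := by
    have h := HE.promote (Dd ++ d :: e :: U ++ V ++ [a]) (U ++ Tl) b e N hbe
    refine HE.congr ?_ ?_ h <;> simp [List.append_assoc]
  -- S6 → S7 : slide the N copies of e left across V ++ [a]
  have t7 : HE (Dd ++ d :: e :: U ++ V ++ a :: List.replicate N e ++ b :: e :: U ++ Tl)
      (Dd ++ d :: e :: U ++ List.replicate N e ++ V ++ a :: b :: e :: U ++ Tl) := by
    have h := HE.rep_slide_left (Dd ++ d :: e :: U) (b :: e :: U ++ Tl) (V ++ [a]) e N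
      (by intro x hx; rcases List.mem_append.mp hx with h | h
          · exact heV x h
          · rw [List.mem_singleton.mp h]; exact hea)
    refine HE.congr ?_ ?_ h <;> simp [List.append_assoc]
  -- S7 → S8 : slide the N copies of e left across U'
  have t8 : HE (Dd ++ d :: e :: U ++ List.replicate N e ++ V ++ a :: b :: e :: U ++ Tl)
      (Dd ++ d :: e :: f :: List.replicate N e ++ U' ++ V ++ a :: b :: e :: U ++ Tl) := by
    have h := HE.rep_slide_left (Dd ++ [d, e, f]) (V ++ a :: b :: e :: U ++ Tl) U' e N heU'
    refine HE.congr ?_ ?_ h <;> simp [hU, List.append_assoc]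
  -- S8 → S9 : promote the N copies of e across the pair (e, f)
  have t9 : HE (Dd ++ d :: e :: f :: List.replicate N e ++ U' ++ V ++ a :: b :: e :: U ++ Tl)
      (Dd ++ d :: List.replicate N f ++ e :: U ++ V ++ a :: b :: e :: U ++ Tl) := by
    have h := HE.promote (Dd ++ [d]) (U' ++ V ++ a :: b :: e :: U ++ Tl) e f N hef
    refine HE.congr ?_ ?_ h <;> simp [hU, List.append_assoc]
  have final := ((((((((t1.trans t2).trans t3).trans t4).trans t5).trans t6).trans t7).trans
    t8).trans t9)
  refine HE.congr ?_ ?_ final <;> simp [hU, List.append_assoc]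

end S15

namespace S15
set_option linter.unusedSectionVars false
variable {G : Type*} [Group G]

/-- The core pure-Hurwitz computation of the last stage (k = m). -/
lemma stage_final_core (Dd V : List G) (a b : G) (n' : ℕ)
    (hbV : ∀ x ∈ V, Commute b x) :
    HE (Dd ++ List.replicate n' b ++
          ((b^(n'+1))⁻¹ * a * b^(n'+1)) :: b :: V ++
          ((b^(n'+1))⁻¹ * a * b^(n'+1)) :: b :: [b])
       (Dd ++ (b⁻¹ * a * b) :: V ++ a :: List.replicate (n'+3) b) := by
  set N := n' + 1 with hN
  set w := (b^N)⁻¹ * a * b^N with hw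
  set d := b⁻¹ * a * b with hd
  have I1 : b ^ n' * w * (b ^ n')⁻¹ = d := by
    rw [hw, hd, hN, pow_succ']
    group
  have I2 : b ^ N * w * (b ^ N)⁻¹ = a := by rw [hw]; group
  have t1 : HE (Dd ++ List.replicate n' b ++ w :: b :: V ++ w :: b :: [b])
      (Dd ++ d :: List.replicate N b ++ V ++ w :: b :: [b]) := by
    have h := HE.peel Dd (b :: V ++ w :: b :: [b]) b w n'
    rw [I1] at h
    refine HE.congr ?_ ?_ h <;>
      simp [hN, List.replicate_succ', List.append_assoc, rep_shift]
  have t2 : HE (Dd ++ d :: List.replicate N b ++ V ++ w :: b :: [b])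
      (Dd ++ d :: V ++ List.replicate N b ++ w :: b :: [b]) := by
    have h := HE.rep_slide_right (Dd ++ [d]) (w :: b :: [b]) V b N hbV
    refine HE.congr ?_ ?_ h <;> simp [List.append_assoc]
  have t3 : HE (Dd ++ d :: V ++ List.replicate N b ++ w :: b :: [b])
      (Dd ++ d :: V ++ a :: List.replicate (n'+3) b) := by
    have h := HE.peel (Dd ++ d :: V) (b :: [b]) b w N
    rw [I2] at h
    refine HE.congr ?_ ?_ h <;>
      simp [hN, List.append_assoc, rep_shift,
        show n' + 3 = (n' + 1) + 1 + 1 from by omega, List.replicate_succ']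
  exact HE.congr rfl (by simp [List.append_assoc]) ((t1.trans t2).trans t3)

section Ctx2
variable {g : ℕ} {c : ℕ → G}

/-- `d̄ j` -/
def dbar (c : ℕ → G) (j : ℕ) : G := (c (j+1))⁻¹ * c j * c (j+1)

def Dl (c : ℕ → G) (s : ℕ) : List G := (List.range s).map fun j => dbar c (2*j+2)

/-- the invariant state before stage `2s+3` -/
def Yst (g : ℕ) (c : ℕ → G) (s : ℕ) : List G :=
  Dl c s ++ List.replicate s (c (2*s+3)) ++ seqAsc c (2*s+2) (2*g+1) ++
    seqAsc c 1 (2*g+1) ++ [c (2*g+1)]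

lemma Dl_succ (s : ℕ) : Dl c (s+1) = Dl c s ++ [dbar c (2*s+2)] := by
  simp [Dl, List.range_succ]

lemma map_conj_seqAsc_fix {a' b' : ℕ} (ψ : G)
    (hfix : ∀ i, a' ≤ i → i ≤ b' → ψ * c i * ψ⁻¹ = c i) :
    (seqAsc c a' b').map (fun w => ψ * w * ψ⁻¹) = seqAsc c a' b' := by
  rw [map_seqAsc]
  exact (seqAsc_congr (fun i h1 h2 => (hfix i h1 h2).symm)).symm

lemma map_conj_Dl_fix (s : ℕ) (ψ : G)
    (hfix : ∀ j, j < s → ψ * dbar c (2*j+2) * ψ⁻¹ = dbar c (2*j+2)) :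
    (Dl c s).map (fun w => ψ * w * ψ⁻¹) = Dl c s := by
  unfold Dl
  rw [List.map_map]
  apply List.map_congr_left
  intro j hj
  simp only [List.mem_range] at hj
  exact hfix j hj

end Ctx2
end S15

namespace S15
set_option linter.unusedSectionVars false
variable {G : Type*} [Group G]

section Ctx3
variable {g : ℕ} {c : ℕ → G}

lemma stage (hbraid : Hb g c) (hcomm : Hc g c) (s : ℕ) (hs : s + 2 ≤ g) :
    HurwitzEquivC (Yst g c s) (Yst g c (s+1)) := by
  set m := 2*g+1 with hm
  set b := c (2*s+3) with hb
  set ψ := (b^(s+1))⁻¹ with hψ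
  set φ := fun w : G => ψ * w * ψ⁻¹ with hφ
  have hfix : ∀ x : G, Commute b x → φ x = x := by
    intro x hx
    exact conj_fix ((hx.pow_left (s+1)).inv_left)
  have hcombV : ∀ i, 1 ≤ i → i ≤ 2*s+1 → Commute b (c i) := by
    intro i h1 h2
    exact (comm_c hcomm h1 (by omega) (by omega)).symm
  have hcombU : ∀ i, 2*s+5 ≤ i → i ≤ m → Commute b (c i) := by
    intro i h1 h2
    exact comm_c hcomm (by omega) (by omega) (by omega)
  -- the conjugated state equals the S0 input of stage_core
  have hmap : (Yst g c s).map φ =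
      Dl c s ++ List.replicate s b ++
        ((b^(s+1))⁻¹ * c (2*s+2) * b^(s+1)) :: b :: ((b^(s+1))⁻¹ * c (2*s+4) * b^(s+1)) ::
        (c (2*s+5) :: seqAsc c (2*s+6) m) ++ seqAsc c 1 (2*s+1) ++
        ((b^(s+1))⁻¹ * c (2*s+2) * b^(s+1)) :: b :: ((b^(s+1))⁻¹ * c (2*s+4) * b^(s+1)) ::
        (c (2*s+5) :: seqAsc c (2*s+6) m) ++ [c m] := by
    have hDl : (Dl c s).map φ = Dl c s := by
      apply map_conj_Dl_fix
      intro j hj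
      apply hfix
      have h1 : Commute b (c (2*j+3)) := (comm_c hcomm (by omega) (by omega) (by omega)).symm
      have h2 : Commute b (c (2*j+2)) := (comm_c hcomm (by omega) (by omega) (by omega)).symm
      exact (h1.inv_right.mul_right h2).mul_right h1
    have hrep : (List.replicate s b).map φ = List.replicate s b := by
      rw [List.map_replicate, hfix b (Commute.refl b)]
    have hchain2 : seqAsc c (2*s+2) m
        = c (2*s+2) :: b :: c (2*s+4) :: c (2*s+5) :: seqAsc c (2*s+6) m := by
      rw [seqAsc_cons (by omega), seqAsc_cons (by omega), seqAsc_cons (by omega),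
        seqAsc_cons (by omega)]
    have hUfix : (seqAsc c (2*s+6) m).map φ = seqAsc c (2*s+6) m := by
      apply map_conj_seqAsc_fix
      intro i h1 h2
      exact hfix _ (hcombU i (by omega) h2)
    have hVfix : (seqAsc c 1 (2*s+1)).map φ = seqAsc c 1 (2*s+1) := by
      apply map_conj_seqAsc_fix
      intro i h1 h2
      exact hfix _ (hcombV i h1 h2)
    have hchain1 : seqAsc c 1 m = seqAsc c 1 (2*s+1) ++ seqAsc c (2*s+2) m :=
      (seqAsc_append (by omega) (by omega)).symm
    have hfixf : φ (c (2*s+5)) = c (2*s+5) := hfix _ (hcombU _ (by omega) (by omega))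
    have hfixm : φ (c m) = c m := hfix _ (hcombU m (by omega) (by omega))
    have hfixb : φ b = b := hfix b (Commute.refl b)
    have hφ22 : φ (c (2*s+2)) = (b^(s+1))⁻¹ * c (2*s+2) * b^(s+1) := by
      simp [hφ, hψ]
    have hφ24 : φ (c (2*s+4)) = (b^(s+1))⁻¹ * c (2*s+4) * b^(s+1) := by
      simp [hφ, hψ]
    unfold Yst
    rw [hchain1, hchain2]
    simp only [List.map_append, List.map_cons, List.map_nil, hDl, hrep, hUfix, hVfix,
      hfixf, hfixm, hfixb, hφ22, hφ24]
    simp [List.append_assoc]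
    rw [show c (2*s+3) = b from rfl, hfixb, show c (2*g+1) = c m from rfl, hfixm]
  have hcore := stage_core (Dl c s) (seqAsc c 1 (2*s+1)) (seqAsc c (2*s+6) m) [c m]
    (c (2*s+2)) b (c (2*s+4)) (c (2*s+5)) s
    (by have := hbraid (2*s+3) (by omega) (by omega)
        simpa [hb] using this)
    (by have := hbraid (2*s+4) (by omega) (by omega)
        simpa using this)
    (hcombU (2*s+5) (by omega) (by omega))
    (by intro x hx
        obtain ⟨i, h1, h2, rfl⟩ := mem_seqAsc hx
        exact hcombU i (by omega) h2)
    (by intro x hx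
        obtain ⟨i, h1, h2, rfl⟩ := mem_seqAsc hx
        exact hcombV i h1 h2)
    (by intro x hx
        obtain ⟨i, h1, h2, rfl⟩ := mem_seqAsc hx
        exact (comm_c hcomm (by omega) (by omega) (by omega)).symm)
    (by intro x hx
        obtain ⟨i, h1, h2, rfl⟩ := mem_seqAsc hx
        exact comm_c hcomm (by omega) (by omega) (by omega))
    ((comm_c hcomm (by omega) (by omega) (by omega)).symm)
  -- identify the output of stage_core with Yst (s+1)
  have hout : Dl c s ++ (b⁻¹ * c (2*s+2) * b) :: List.replicate (s+1) (c (2*s+5)) ++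
      c (2*s+4) :: (c (2*s+5) :: seqAsc c (2*s+6) m) ++ seqAsc c 1 (2*s+1) ++
      c (2*s+2) :: b :: c (2*s+4) :: (c (2*s+5) :: seqAsc c (2*s+6) m) ++ [c m]
      = Yst g c (s+1) := by
    unfold Yst
    rw [Dl_succ]
    have e1 : seqAsc c (2*(s+1)+2) m = c (2*s+4) :: c (2*s+5) :: seqAsc c (2*s+6) m := by
      rw [show 2*(s+1)+2 = 2*s+4 from by omega, seqAsc_cons (by omega),
        seqAsc_cons (by omega)]
    have e2 : seqAsc c 1 m = seqAsc c 1 (2*s+1) ++ seqAsc c (2*s+2) m :=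
      (seqAsc_append (by omega) (by omega)).symm
    have e3 : seqAsc c (2*s+2) m
        = c (2*s+2) :: b :: c (2*s+4) :: c (2*s+5) :: seqAsc c (2*s+6) m := by
      rw [seqAsc_cons (by omega), seqAsc_cons (by omega), seqAsc_cons (by omega),
        seqAsc_cons (by omega)]
    rw [e1, e2, e3]
    have hdb : dbar c (2*s+2) = b⁻¹ * c (2*s+2) * b := by
      rw [dbar, hb]
    rw [hdb, show 2*(s+1)+3 = 2*s+5 from by omega]
    simp [List.append_assoc]
    rfl
  have step1 : HurwitzEquivC (Yst g c s) ((Yst g c s).map φ) := HEC.conj ψ _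
  rw [hmap] at step1
  have step2 := HE.toC hcore
  rw [hout] at step2
  exact HEC.trans step1 step2

end Ctx3
end S15

namespace S15
set_option linter.unusedSectionVars false
variable {G : Type*} [Group G]

section Ctx4
variable {g : ℕ} {c : ℕ → G}

lemma stageFinal (hbraid : Hb g c) (hcomm : Hc g c) (s : ℕ) (hgs : g = s + 1) :
    HurwitzEquivC (Yst g c s)
      (Dl c g ++ seqAsc c 1 (2*g) ++ List.replicate (g+2) (c (2*g+1))) := by
  set m := 2*g+1 with hm
  set b := c (2*s+3) with hb
  have hbm : b = c m := by rw [hb]; congr 1; omega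
  set ψ := (b^(s+1))⁻¹ with hψ
  set φ := fun w : G => ψ * w * ψ⁻¹ with hφ
  have hfix : ∀ x : G, Commute b x → φ x = x := by
    intro x hx
    exact conj_fix ((hx.pow_left (s+1)).inv_left)
  have hcombV : ∀ i, 1 ≤ i → i ≤ 2*s+1 → Commute b (c i) := by
    intro i h1 h2
    exact (comm_c hcomm h1 (by omega) (by omega)).symm
  have hmap : (Yst g c s).map φ =
      Dl c s ++ List.replicate s b ++
        ((b^(s+1))⁻¹ * c (2*s+2) * b^(s+1)) :: b :: seqAsc c 1 (2*s+1) ++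
        ((b^(s+1))⁻¹ * c (2*s+2) * b^(s+1)) :: b :: [b] := by
    have hDl : (Dl c s).map φ = Dl c s := by
      apply map_conj_Dl_fix
      intro j hj
      apply hfix
      have h1 : Commute b (c (2*j+3)) := (comm_c hcomm (by omega) (by omega) (by omega)).symm
      have h2 : Commute b (c (2*j+2)) := (comm_c hcomm (by omega) (by omega) (by omega)).symm
      exact (h1.inv_right.mul_right h2).mul_right h1
    have hrep : (List.replicate s b).map φ = List.replicate s b := by
      rw [List.map_replicate, hfix b (Commute.refl b)]
    have hchain2 : seqAsc c (2*s+2) m = [c (2*s+2), b] := by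
      rw [seqAsc_cons (by omega)]
      rw [show (2*s+2+1 : ℕ) = m from by omega, seqAsc_self, ← hbm]
    have hVfix : (seqAsc c 1 (2*s+1)).map φ = seqAsc c 1 (2*s+1) := by
      apply map_conj_seqAsc_fix
      intro i h1 h2
      exact hfix _ (hcombV i h1 h2)
    have hchain1 : seqAsc c 1 m = seqAsc c 1 (2*s+1) ++ seqAsc c (2*s+2) m :=
      (seqAsc_append (by omega) (by omega)).symm
    have hfixb : φ b = b := hfix b (Commute.refl b)
    have hfixm : φ (c m) = c m := by rw [← hbm]; exact hfixb
    have hφ22 : φ (c (2*s+2)) = (b^(s+1))⁻¹ * c (2*s+2) * b^(s+1) := by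
      simp [hφ, hψ]
    unfold Yst
    rw [show 2*g+1 = m from rfl, hchain1, hchain2]
    simp only [List.map_append, List.map_cons, List.map_nil, hDl, hrep, hVfix,
      hfixb, hfixm, hφ22]
    rw [← hbm]
    simp [List.append_assoc]
    exact Or.inr hfixb
  have hcore := stage_final_core (Dl c s) (seqAsc c 1 (2*s+1)) (c (2*s+2)) b s
    (by intro x hx
        obtain ⟨i, h1, h2, rfl⟩ := mem_seqAsc hx
        exact hcombV i h1 h2)
  have hout : Dl c s ++ (b⁻¹ * c (2*s+2) * b) :: seqAsc c 1 (2*s+1) ++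
      c (2*s+2) :: List.replicate (s+3) b
      = Dl c g ++ seqAsc c 1 (2*g) ++ List.replicate (g+2) (c (2*g+1)) := by
    have hdb : dbar c (2*s+2) = b⁻¹ * c (2*s+2) * b := by
      rw [dbar, hb]
    have hDg : Dl c g = Dl c s ++ [b⁻¹ * c (2*s+2) * b] := by
      rw [hgs, Dl_succ, hdb]
    have hSg : seqAsc c 1 (2*g) = seqAsc c 1 (2*s+1) ++ [c (2*s+2)] := by
      rw [show 2*g = 2*s+1+1 from by omega, seqAsc_snoc (by omega)]
    have hRg : List.replicate (g+2) (c (2*g+1)) = List.replicate (s+3) b := by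
      rw [show g+2 = s+3 from by omega, show 2*g+1 = 2*s+3 from by omega, ← hb]
    rw [hDg, hSg, hRg]
    simp [List.append_assoc]
  have step1 : HurwitzEquivC (Yst g c s) ((Yst g c s).map φ) := HEC.conj ψ _
  rw [hmap] at step1
  have step2 := HE.toC hcore
  rw [hout] at step2
  exact HEC.trans step1 step2

lemma main (hbraid : Hb g c) (hcomm : Hc g c) (hg : 1 ≤ g) :
    HurwitzEquivC (seqAsc c 1 (2*g+1) ++ seqAsc c 1 (2*g+1))
      (Dl c g ++ seqAsc c 1 (2*g) ++ List.replicate (g+2) (c (2*g+1))) := by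
  obtain ⟨s0, rfl⟩ : ∃ s0, g = s0 + 1 := ⟨g - 1, by omega⟩
  have h0 : HurwitzEquivC (seqAsc c 1 (2*(s0+1)+1) ++ seqAsc c 1 (2*(s0+1)+1))
      (Yst (s0+1) c 0) := by
    have := stepA hbraid hcomm hg
    have e : Yst (s0+1) c 0 = seqAsc c 2 (2*(s0+1)+1) ++ seqAsc c 1 (2*(s0+1)+1)
        ++ [c (2*(s0+1)+1)] := by
      unfold Yst Dl
      simp [List.append_assoc]
    rw [e]
    exact HE.toC this
  have climb : ∀ j, j ≤ s0 → HurwitzEquivC (Yst (s0+1) c 0) (Yst (s0+1) c j) := by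
    intro j hj
    induction j with
    | zero => exact Relation.ReflTransGen.refl
    | succ j ih =>
      exact HEC.trans (ih (by omega)) (stage hbraid hcomm j (by omega))
  exact HEC.trans (HEC.trans h0 (climb s0 (le_refl _)))
    (stageFinal hbraid hcomm s0 rfl)

end Ctx4
end S15

/-- relation (12) of the paper: with `d̄ j = (c (j+1))⁻¹ * c j * c (j+1)`,
the sequence `(c 1, …, c (2g+1), c 1, …, c (2g+1))` is Hurwitz equivalent up to
simultaneous conjugation to
`(d̄ 2, d̄ 4, …, d̄ (2g), c 1, c 2, …, c (2g), (c (2g+1))^{g+2})`. -/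
theorem statement15 {G : Type*} [Group G] (g : ℕ) (hg : 1 ≤ g) (c : ℕ → G)
    (hbraid : ∀ i, 1 ≤ i → i + 1 ≤ 2 * g + 1 →
      c i * c (i + 1) * c i = c (i + 1) * c i * c (i + 1))
    (hcomm : ∀ i j, 1 ≤ i → j ≤ 2 * g + 1 → i + 2 ≤ j → c i * c j = c j * c i) :
    HurwitzEquivC
      (seqAsc c 1 (2 * g + 1) ++ seqAsc c 1 (2 * g + 1))
      (((List.range g).map fun j =>
          (c (2 * j + 3))⁻¹ * c (2 * j + 2) * c (2 * j + 3)) ++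
        seqAsc c 1 (2 * g) ++
        List.replicate (g + 2) (c (2 * g + 1))) := by
  have h := S15.main (g := g) (c := c) hbraid hcomm hg
  have e : S15.Dl c g
      = (List.range g).map fun j => (c (2 * j + 3))⁻¹ * c (2 * j + 2) * c (2 * j + 3) := rfl
  rwa [e] at h
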